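/- Theorem 2 (second part, equality): for N ≥ 2 and any two distinct positions w ≠ w' in Fin N, the correlation between the second- and fourth-order moments satisfies E[X_w² · X_{w'}⁴] = (N·m₂·m₄ − m₆)/(N − 1). -/

import Mathlib

/-- Expectation of a real-valued random variable on the finite probability space
`Equiv.Perm (Fin N)` equipped with the uniform probability measure. -/
noncomputable def permExpect (N : ℕ) (f : Equiv.Perm (Fin N) → ℝ) : ℝ :=
  (∑ σ : Equiv.Perm (Fin N), f σ) / (Fintype.card (Equiv.Perm (Fin N)) : ℝ)

/-- Empirical `k`-th moment of the amplitude block `u`. -/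
noncomputable def empMoment (N : ℕ) (u : Fin N → ℝ) (k : ℕ) : ℝ :=
  (1 / (N : ℝ)) * ∑ i : Fin N, (u i) ^ k

open Finset

lemma exists_perm_two {α : Type*} [DecidableEq α] {i j i' j' : α}
    (hij : i ≠ j) (hij' : i' ≠ j') :
    ∃ π : Equiv.Perm α, π i = i' ∧ π j = j' := by
  refine ⟨Equiv.swap (Equiv.swap i i' j) j' * Equiv.swap i i', ?_, ?_⟩
  · have hne : i' ≠ Equiv.swap i i' j := fun h =>
      hij ((Equiv.swap i i').injective ((Equiv.swap_apply_left i i').trans h))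
    simp [Equiv.Perm.mul_apply, Equiv.swap_apply_left,
      Equiv.swap_apply_of_ne_of_ne hne hij']
  · simp [Equiv.Perm.mul_apply, Equiv.swap_apply_left]

/-- Theorem 2, second part (equality): for distinct positions `w ≠ w'`,
`E[X_w² · X_{w'}⁴] = (N·m₂·m₄ − m₆)/(N − 1)`. -/
theorem corr_second_fourth (N : ℕ) (hN : 2 ≤ N) (u : Fin N → ℝ)
    (w w' : Fin N) (hww' : w ≠ w') :
    permExpect N (fun σ => (u (σ w)) ^ 2 * (u (σ w')) ^ 4)
      = ((N : ℝ) * empMoment N u 2 * empMoment N u 4 - empMoment N u 6) / ((N : ℝ) - 1) := by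
  classical
  set f : Fin N × Fin N → ℝ := fun p => u p.1 ^ 2 * u p.2 ^ 4 with hf
  set g : Equiv.Perm (Fin N) → Fin N × Fin N := fun σ => (σ w, σ w') with hg
  set k : ℕ := (univ.filter (fun σ : Equiv.Perm (Fin N) => g σ = (w, w'))).card with hk
  have hmaps : ∀ σ : Equiv.Perm (Fin N), g σ ∈ (univ : Finset (Fin N)).offDiag := by
    intro σ
    simp only [hg, Finset.mem_offDiag, mem_univ, true_and]
    exact fun h => hww' (σ.injective h)
  -- all fibers have the same cardinality
  have hfib : ∀ p ∈ (univ : Finset (Fin N)).offDiag,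
      (univ.filter (fun σ : Equiv.Perm (Fin N) => g σ = p)).card = k := by
    rintro ⟨i, j⟩ hp
    rw [Finset.mem_offDiag] at hp
    obtain ⟨π, hπ1, hπ2⟩ := exists_perm_two hp.2.2 hww'
    rw [hk]
    apply Finset.card_bij' (fun σ _ => π * σ) (fun σ _ => π⁻¹ * σ)
    · intro σ hσ
      simp only [mem_filter, mem_univ, true_and, hg, Prod.mk.injEq] at hσ ⊢
      rw [Equiv.Perm.mul_apply, Equiv.Perm.mul_apply, hσ.1, hσ.2, hπ1, hπ2]
      exact ⟨rfl, rfl⟩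
    · intro σ hσ
      simp only [mem_filter, mem_univ, true_and, hg, Prod.mk.injEq] at hσ ⊢
      constructor
      · rw [Equiv.Perm.mul_apply, hσ.1, ← hπ1, Equiv.Perm.inv_def, Equiv.symm_apply_apply]
      · rw [Equiv.Perm.mul_apply, hσ.2, ← hπ2, Equiv.Perm.inv_def, Equiv.symm_apply_apply]
    · intro σ _; simp [mul_assoc]
    · intro σ _; simp [← mul_assoc]
  have hk0 : 0 < k := by
    rw [hk]
    apply Finset.card_pos.2
    exact ⟨1, by simp [hg]⟩
  -- total count
  have hcard : Fintype.card (Equiv.Perm (Fin N)) = (N * N - N) * k := by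
    rw [← Finset.card_univ, Finset.card_eq_sum_card_fiberwise (fun σ _ => hmaps σ),
      Finset.sum_congr rfl hfib, Finset.sum_const, smul_eq_mul,
      Finset.offDiag_card, Finset.card_univ, Fintype.card_fin]
  -- sum over permutations as sum over off-diagonal pairs
  have hsum : (∑ σ : Equiv.Perm (Fin N), u (σ w) ^ 2 * u (σ w') ^ 4)
      = ∑ p ∈ (univ : Finset (Fin N)).offDiag, (k : ℝ) * f p := by
    rw [← Finset.sum_fiberwise_of_maps_to (fun σ _ => hmaps σ)
      (fun σ => u (σ w) ^ 2 * u (σ w') ^ 4)]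
    refine Finset.sum_congr rfl (fun p hp => ?_)
    have : ∀ σ ∈ univ.filter (fun σ : Equiv.Perm (Fin N) => g σ = p),
        u (σ w) ^ 2 * u (σ w') ^ 4 = f p := by
      intro σ hσ
      simp only [mem_filter] at hσ
      rw [hf, ← hσ.2]
    rw [Finset.sum_congr rfl this, Finset.sum_const, nsmul_eq_mul, hfib p hp]
  -- off-diagonal sum identity
  have hT : ∑ p ∈ (univ : Finset (Fin N)).offDiag, f p
      = (∑ i, u i ^ 2) * (∑ i, u i ^ 4) - ∑ i, u i ^ 6 := by
    have h1 : (∑ i, u i ^ 2) * (∑ i, u i ^ 4)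
        = ∑ p ∈ (univ : Finset (Fin N)) ×ˢ univ, f p := by
      rw [Finset.sum_mul_sum, Finset.sum_product]
    have h2 : (univ : Finset (Fin N)) ×ˢ univ = univ.diag ∪ univ.offDiag :=
      (Finset.diag_union_offDiag _).symm
    have h3 : ∑ p ∈ (univ : Finset (Fin N)).diag, f p = ∑ i, u i ^ 6 := by
      rw [Finset.sum_diag]
      refine Finset.sum_congr rfl (fun i _ => ?_)
      simp [hf]; ring
    rw [h1, h2, Finset.sum_union (Finset.disjoint_diag_offDiag _), h3]
    ring
  have hN0 : (N : ℝ) ≠ 0 := by positivity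
  have hN1 : (N : ℝ) - 1 ≠ 0 := by
    have : (2 : ℝ) ≤ (N : ℝ) := by exact_mod_cast hN
    linarith
  have hkR : (k : ℝ) ≠ 0 := Nat.cast_ne_zero.2 hk0.ne'
  have hcardR : (Fintype.card (Equiv.Perm (Fin N)) : ℝ) = ((N : ℝ) * N - N) * k := by
    rw [hcard]
    push_cast [Nat.le_mul_of_pos_left N (by omega : 0 < N)]
    ring
  have hA : ((N : ℝ) * N - N) * k ≠ 0 := by
    apply mul_ne_zero _ hkR
    have : (2 : ℝ) ≤ (N : ℝ) := by exact_mod_cast hN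
    nlinarith
  rw [permExpect, hsum, ← Finset.mul_sum, hT, hcardR, empMoment, empMoment, empMoment,
    div_eq_div_iff hA hN1]
  field_simp
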